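/- arXiv:1512.02423 — 2 statements merged into one kernel-verified Lean document; each statement's English description precedes it below -/
import Mathlib

section
/- (Lower bound for the first derivative of the phase at high frequencies) There exist constants y₀ > 0 and C > 0, independent of μ, such that for all μ > 0 and all ξ ≥ y₀/√μ, one has |ω_μ'(ξ)| ≥ C μ^{−1/4} ξ^{−1/2}, where ω_μ' is the derivative of ω_μ. -/
open MeasureTheory Real

/-- The dispersion relation `ω_μ(ξ) = √(|ξ| tanh(√μ |ξ|) / √μ)`. -/
noncomputable def omegaWW (μ ξ : ℝ) : ℝ :=
  Real.sqrt (|ξ| * Real.tanh (Real.sqrt μ * |ξ|) / Real.sqrt μ)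

lemma hasDerivAt_tanh' (x : ℝ) : HasDerivAt Real.tanh (1 / Real.cosh x ^ 2) x := by
  have h := (Real.hasDerivAt_sinh x).div (Real.hasDerivAt_cosh x)
    (ne_of_gt (Real.cosh_pos x))
  have hval : (Real.cosh x * Real.cosh x - Real.sinh x * Real.sinh x) / Real.cosh x ^ 2
      = 1 / Real.cosh x ^ 2 := by
    have := Real.cosh_sq_sub_sinh_sq x
    rw [show Real.cosh x * Real.cosh x - Real.sinh x * Real.sinh x
      = Real.cosh x ^ 2 - Real.sinh x ^ 2 by ring, this]
  have hfun : (fun y => Real.sinh y / Real.cosh y) = Real.tanh := by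
    funext y; rw [Real.tanh_eq_sinh_div_cosh]
  rw [hval] at h
  rw [← hfun]; exact h

lemma tanh_strictMono : StrictMono Real.tanh := by
  apply strictMono_of_deriv_pos
  intro x
  rw [(hasDerivAt_tanh' x).deriv]
  positivity

lemma tanh_le_one (x : ℝ) : Real.tanh x ≤ 1 := by
  rw [Real.tanh_eq_sinh_div_cosh, div_le_one (Real.cosh_pos x)]
  exact (Real.sinh_lt_cosh x).le

lemma tanh_one_pos : 0 < Real.tanh 1 := by
  have := tanh_strictMono (show (0:ℝ) < 1 by norm_num)
  rwa [Real.tanh_zero] at this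

/-- Lower bound for the first derivative of the phase at high frequencies. -/
theorem first_deriv_phase_lower_bound_high_freq :
    ∃ y₀ > 0, ∃ C > 0, ∀ μ > 0, ∀ ξ : ℝ, y₀ / Real.sqrt μ ≤ ξ →
      C * μ ^ (-(1:ℝ)/4) * ξ ^ (-(1:ℝ)/2) ≤ |deriv (omegaWW μ) ξ| := by
  refine ⟨1, one_pos, Real.tanh 1 / 2, half_pos tanh_one_pos, ?_⟩
  intro μ hμ ξ hξ'
  set s := Real.sqrt μ with hs_def
  have hs : 0 < s := Real.sqrt_pos.mpr hμ
  have hξ : 0 < ξ := lt_of_lt_of_le (by positivity) hξ'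
  set x := s * ξ with hx_def
  have hx1 : 1 ≤ x := by
    rw [div_le_iff₀ hs] at hξ'
    nlinarith
  set T := Real.tanh x with hT_def
  have hT1 : Real.tanh 1 ≤ T := tanh_strictMono.monotone hx1
  have hTpos : 0 < T := lt_of_lt_of_le tanh_one_pos hT1
  have hTle : T ≤ 1 := tanh_le_one x
  -- derivative computation
  have hinner : HasDerivAt (fun y => y * Real.tanh (s * y) / s)
      ((1 * T + ξ * (1 / Real.cosh x ^ 2 * (s * 1))) / s) ξ := by
    refine HasDerivAt.div_const ?_ s
    exact (hasDerivAt_id ξ).mul ((hasDerivAt_tanh' x).comp ξ ((hasDerivAt_id ξ).const_mul s))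
  have hne : ξ * Real.tanh (s * ξ) / s ≠ 0 := by
    have : 0 < ξ * T / s := by positivity
    rw [← hx_def, ← hT_def]; exact ne_of_gt this
  have hsq := hinner.sqrt hne
  set D := (1 * T + ξ * (1 / Real.cosh x ^ 2 * (s * 1))) / s /
    (2 * Real.sqrt (ξ * Real.tanh (s * ξ) / s)) with hD_def
  have hderiv : deriv (omegaWW μ) ξ = D := by
    have hev : omegaWW μ =ᶠ[nhds ξ] fun y => Real.sqrt (y * Real.tanh (s * y) / s) := by
      filter_upwards [eventually_gt_nhds hξ] with y hy
      rw [omegaWW, abs_of_pos hy]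
    rw [hev.deriv_eq]
    exact hsq.deriv
  rw [hderiv]
  set R := Real.sqrt (ξ * Real.tanh (s * ξ) / s) with hR_def
  have hRval : R = Real.sqrt (ξ * T / s) := by rw [hR_def, ← hx_def, ← hT_def]
  have hRpos : 0 < R := by rw [hRval]; positivity
  set a := Real.sqrt s with ha_def
  set b := Real.sqrt ξ with hb_def
  have ha : 0 < a := Real.sqrt_pos.mpr hs
  have hb : 0 < b := Real.sqrt_pos.mpr hξ
  have ha2 : a ^ 2 = s := Real.sq_sqrt hs.le
  have hb2 : b ^ 2 = ξ := Real.sq_sqrt hξ.le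
  have hRle : R ≤ b / a := by
    rw [hRval, ← Real.sqrt_div hξ.le]
    apply Real.sqrt_le_sqrt
    rw [div_le_div_iff₀ hs hs]
    nlinarith
  have hDpos : 0 < D := by
    rw [hD_def]
    have hnum : 0 < (1 * T + ξ * (1 / Real.cosh x ^ 2 * (s * 1))) / s := by
      have : 0 < Real.cosh x := Real.cosh_pos x
      positivity
    positivity
  rw [abs_of_pos hDpos]
  -- rewrite the rpow expressions
  have hμ4 : μ ^ (-(1:ℝ)/4) = a⁻¹ := by
    rw [ha_def, hs_def, Real.sqrt_eq_rpow, Real.sqrt_eq_rpow,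
      ← Real.rpow_mul hμ.le, ← Real.rpow_neg hμ.le]
    norm_num
  have hξ2 : ξ ^ (-(1:ℝ)/2) = b⁻¹ := by
    rw [hb_def, Real.sqrt_eq_rpow, ← Real.rpow_neg hξ.le]
    norm_num
  rw [hμ4, hξ2]
  -- the key chain of inequalities
  have key : Real.tanh 1 / (2 * a * b) ≤ D := by
    have h1 : Real.tanh 1 / (2 * a * b) ≤ T / s / (2 * (b / a)) := by
      have heq : T / s / (2 * (b / a)) = T / (2 * a * b) := by
        rw [← ha2]; field_simp
      rw [heq]
      gcongr
    have h2 : T / s / (2 * (b / a)) ≤ T / s / (2 * R) := by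
      gcongr
    have h3 : T / s / (2 * R) ≤ D := by
      rw [hD_def]
      have hc : 0 < Real.cosh x := Real.cosh_pos x
      have hE : 0 ≤ ξ * (1 / Real.cosh x ^ 2 * (s * 1)) := by positivity
      gcongr
      linarith
    linarith
  calc Real.tanh 1 / 2 * a⁻¹ * b⁻¹ = Real.tanh 1 / (2 * a * b) := by
        field_simp
      _ ≤ D := key
end

section
/- (Asymptotics of g'' at the origin) Let g : (0, ∞) → ℝ be defined by g(ξ) = √(ξ tanh ξ). Then g is twice differentiable on (0, ∞) and g''(ξ)/ξ tends to −1 as ξ → 0⁺; in particular |g''(ξ)| is asymptotically equivalent to |ξ| as ξ → 0⁺. -/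
open Real Filter

/-- The function `g(ξ) = √(ξ tanh ξ)`. -/
noncomputable def gWW (ξ : ℝ) : ℝ := Real.sqrt (ξ * Real.tanh ξ)

/- Auxiliary exp-polynomial functions: `M0 ξ` equals
`(2 ξ h h'' − (h')²)·cosh⁴ ξ` for `h(ξ) = ξ tanh ξ`, and `M1,…,M4` are its derivatives. -/
noncomputable def M0 (x : ℝ) : ℝ :=
  x * (Real.exp (2*x) - Real.exp ((-2)*x)) / 2 - x^2 * (Real.exp (2*x) + Real.exp ((-2)*x))
    + x^2 - (Real.exp (4*x) + Real.exp ((-4)*x)) / 16 + 1/8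

noncomputable def M1 (x : ℝ) : ℝ :=
  (Real.exp (2*x) - Real.exp ((-2)*x)) / 2 - x * (Real.exp (2*x) + Real.exp ((-2)*x))
    - 2*x^2 * (Real.exp (2*x) - Real.exp ((-2)*x)) + 2*x - (Real.exp (4*x) - Real.exp ((-4)*x)) / 4

noncomputable def M2 (x : ℝ) : ℝ :=
  -6*x * (Real.exp (2*x) - Real.exp ((-2)*x)) - 4*x^2 * (Real.exp (2*x) + Real.exp ((-2)*x))
    + 2 - (Real.exp (4*x) + Real.exp ((-4)*x))

noncomputable def M3 (x : ℝ) : ℝ :=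
  -6 * (Real.exp (2*x) - Real.exp ((-2)*x)) - 20*x * (Real.exp (2*x) + Real.exp ((-2)*x))
    - 8*x^2 * (Real.exp (2*x) - Real.exp ((-2)*x)) - 4 * (Real.exp (4*x) - Real.exp ((-4)*x))

noncomputable def M4 (x : ℝ) : ℝ :=
  -32 * (Real.exp (2*x) + Real.exp ((-2)*x)) - 56*x * (Real.exp (2*x) - Real.exp ((-2)*x))
    - 16*x^2 * (Real.exp (2*x) + Real.exp ((-2)*x)) - 16 * (Real.exp (4*x) + Real.exp ((-4)*x))

lemma hE (c x : ℝ) : HasDerivAt (fun y : ℝ => Real.exp (c*y)) (c * Real.exp (c*x)) x := by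
  simpa [mul_comm] using ((hasDerivAt_id x).const_mul c).exp

lemma hM0 (x : ℝ) : HasDerivAt M0 (M1 x) x := by
  unfold M0 M1
  have h2 := hE 2 x; have hm2 := hE (-2) x; have h4 := hE 4 x; have hm4 := hE (-4) x
  have total := (((((hasDerivAt_id x).mul (h2.sub hm2)).div_const 2).sub
      ((hasDerivAt_pow 2 x).mul (h2.add hm2))).add (hasDerivAt_pow 2 x)).sub
      ((h4.add hm4).div_const 16) |>.add_const (1/8)
  refine total.congr_deriv ?_
  simp only [id_eq, Pi.add_apply, Pi.sub_apply]
  push_cast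
  ring

lemma hM1 (x : ℝ) : HasDerivAt M1 (M2 x) x := by
  unfold M1 M2
  have h2 := hE 2 x; have hm2 := hE (-2) x; have h4 := hE 4 x; have hm4 := hE (-4) x
  have total := (((((h2.sub hm2).div_const 2).sub
      ((hasDerivAt_id x).mul (h2.add hm2))).sub
      (((hasDerivAt_pow 2 x).const_mul 2).mul (h2.sub hm2))).add
      ((hasDerivAt_id x).const_mul 2)).sub ((h4.sub hm4).div_const 4)
  refine total.congr_deriv ?_
  simp only [id_eq, Pi.add_apply, Pi.sub_apply]
  push_cast
  ring

lemma hM2 (x : ℝ) : HasDerivAt M2 (M3 x) x := by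
  unfold M2 M3
  have h2 := hE 2 x; have hm2 := hE (-2) x; have h4 := hE 4 x; have hm4 := hE (-4) x
  have total := (((((hasDerivAt_id x).const_mul (-6)).mul (h2.sub hm2)).sub
      (((hasDerivAt_pow 2 x).const_mul 4).mul (h2.add hm2))).add_const 2).sub
      (h4.add hm4)
  refine total.congr_deriv ?_
  simp only [id_eq, Pi.add_apply, Pi.sub_apply]
  push_cast
  ring

lemma hM3 (x : ℝ) : HasDerivAt M3 (M4 x) x := by
  unfold M3 M4
  have h2 := hE 2 x; have hm2 := hE (-2) x; have h4 := hE 4 x; have hm4 := hE (-4) x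
  have total := ((((h2.sub hm2).const_mul (-6)).sub
      (((hasDerivAt_id x).const_mul 20).mul (h2.add hm2))).sub
      (((hasDerivAt_pow 2 x).const_mul 8).mul (h2.sub hm2))).sub
      ((h4.sub hm4).const_mul 4)
  refine total.congr_deriv ?_
  simp only [id_eq, Pi.add_apply, Pi.sub_apply]
  push_cast
  ring

lemma contM0 : Continuous M0 := by unfold M0; fun_prop
lemma contM1 : Continuous M1 := by unfold M1; fun_prop
lemma contM2 : Continuous M2 := by unfold M2; fun_prop
lemma contM3 : Continuous M3 := by unfold M3; fun_prop
lemma contM4 : Continuous M4 := by unfold M4; fun_prop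

/-- The key fourth-order limit, by four applications of L'Hôpital's rule. -/
lemma tendsto_M0_div : Tendsto (fun x => M0 x / x^4) (nhdsWithin 0 (Set.Ioi 0)) (nhds (-4)) := by
  have hmem : ∀ᶠ x : ℝ in nhdsWithin 0 (Set.Ioi 0), x ∈ Set.Ioi (0:ℝ) :=
    eventually_mem_nhdsWithin
  have l4 : Tendsto (fun x => M4 x / 24) (nhdsWithin 0 (Set.Ioi 0)) (nhds (-4)) := by
    have : Tendsto (fun x => M4 x / 24) (nhds 0) (nhds (M4 0 / 24)) :=
      (contM4.div_const 24).continuousAt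
    have h0 : M4 0 / 24 = -4 := by unfold M4; norm_num
    rw [h0] at this
    exact this.mono_left nhdsWithin_le_nhds
  have z0 : Tendsto M0 (nhdsWithin 0 (Set.Ioi 0)) (nhds 0) := by
    have := contM0.continuousAt (x := 0)
    have h0 : M0 0 = 0 := by unfold M0; norm_num
    rw [ContinuousAt, h0] at this
    exact this.mono_left nhdsWithin_le_nhds
  have z1 : Tendsto M1 (nhdsWithin 0 (Set.Ioi 0)) (nhds 0) := by
    have := contM1.continuousAt (x := 0)
    have h0 : M1 0 = 0 := by unfold M1; norm_num
    rw [ContinuousAt, h0] at this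
    exact this.mono_left nhdsWithin_le_nhds
  have z2 : Tendsto M2 (nhdsWithin 0 (Set.Ioi 0)) (nhds 0) := by
    have := contM2.continuousAt (x := 0)
    have h0 : M2 0 = 0 := by unfold M2; norm_num
    rw [ContinuousAt, h0] at this
    exact this.mono_left nhdsWithin_le_nhds
  have z3 : Tendsto M3 (nhdsWithin 0 (Set.Ioi 0)) (nhds 0) := by
    have := contM3.continuousAt (x := 0)
    have h0 : M3 0 = 0 := by unfold M3; norm_num
    rw [ContinuousAt, h0] at this
    exact this.mono_left nhdsWithin_le_nhds
  have zp : ∀ n : ℕ, 0 < n → ∀ c : ℝ,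
      Tendsto (fun x : ℝ => c * x^n) (nhdsWithin 0 (Set.Ioi 0)) (nhds 0) := by
    intro n hn c
    have : Tendsto (fun x : ℝ => c * x^n) (nhds 0) (nhds (c * 0^n)) :=
      (continuous_const.mul (continuous_pow n)).continuousAt
    rw [zero_pow hn.ne', mul_zero] at this
    exact this.mono_left nhdsWithin_le_nhds
  have l3 : Tendsto (fun x => M3 x / (24 * x)) (nhdsWithin 0 (Set.Ioi 0)) (nhds (-4)) := by
    apply HasDerivAt.lhopital_zero_nhdsGT (f' := M4) (g' := fun _ => 24)
    · exact Eventually.of_forall hM3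
    · exact Eventually.of_forall fun x => by
        simpa using (hasDerivAt_id x).const_mul (24:ℝ)
    · exact Eventually.of_forall fun x => by norm_num
    · exact z3
    · simpa using zp 1 one_pos 24
    · exact l4
  have l2 : Tendsto (fun x => M2 x / (12 * x^2)) (nhdsWithin 0 (Set.Ioi 0)) (nhds (-4)) := by
    apply HasDerivAt.lhopital_zero_nhdsGT (f' := M3) (g' := fun x => 24 * x)
    · exact Eventually.of_forall hM2
    · exact Eventually.of_forall fun x => by
        have := (hasDerivAt_pow 2 x).const_mul (12:ℝ)
        refine this.congr_deriv ?_; push_cast; ring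
    · exact hmem.mono fun x hx => by
        have : (0:ℝ) < x := hx
        positivity
    · exact z2
    · exact zp 2 two_pos 12
    · exact l3
  have l1 : Tendsto (fun x => M1 x / (4 * x^3)) (nhdsWithin 0 (Set.Ioi 0)) (nhds (-4)) := by
    apply HasDerivAt.lhopital_zero_nhdsGT (f' := M2) (g' := fun x => 12 * x^2)
    · exact Eventually.of_forall hM1
    · exact Eventually.of_forall fun x => by
        have := (hasDerivAt_pow 3 x).const_mul (4:ℝ)
        refine this.congr_deriv ?_; push_cast; ring
    · exact hmem.mono fun x hx => by
        have : (0:ℝ) < x := hx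
        positivity
    · exact z1
    · exact zp 3 three_pos 4
    · exact l2
  have l0 : Tendsto (fun x => M0 x / (1 * x^4)) (nhdsWithin 0 (Set.Ioi 0)) (nhds (-4)) := by
    apply HasDerivAt.lhopital_zero_nhdsGT (f' := M1) (g' := fun x => 4 * x^3)
    · exact Eventually.of_forall hM0
    · exact Eventually.of_forall fun x => by
        have := (hasDerivAt_pow 4 x).const_mul (1:ℝ)
        refine this.congr_deriv ?_; push_cast; ring
    · exact hmem.mono fun x hx => by
        have : (0:ℝ) < x := hx
        positivity
    · exact z0
    · exact zp 4 four_pos 1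
    · exact l1
  simpa using l0

lemma myTanh_hasDerivAt (x : ℝ) : HasDerivAt Real.tanh (1 - Real.tanh x ^ 2) x := by
  have h : Real.tanh = fun y => Real.sinh y / Real.cosh y :=
    funext fun y => Real.tanh_eq_sinh_div_cosh y
  rw [h]
  have hd := (Real.hasDerivAt_sinh x).div (Real.hasDerivAt_cosh x) (Real.cosh_pos x).ne'
  refine hd.congr_deriv ?_
  have hc := (Real.cosh_pos x).ne'
  field_simp

lemma myTanh_pos {x : ℝ} (hx : 0 < x) : 0 < Real.tanh x := by
  rw [Real.tanh_eq_sinh_div_cosh]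
  exact div_pos (by rwa [Real.sinh_pos_iff]) (Real.cosh_pos x)

lemma h_prod (x : ℝ) :
    HasDerivAt (fun y => y * Real.tanh y) (Real.tanh x + x * (1 - Real.tanh x ^ 2)) x := by
  have := (hasDerivAt_id x).mul (myTanh_hasDerivAt x)
  simp only [one_mul] at this
  exact this

/-- First derivative of `gWW` on `(0,∞)`. -/
noncomputable def G1 (x : ℝ) : ℝ :=
  (Real.tanh x + x * (1 - Real.tanh x ^ 2)) / (2 * Real.sqrt (x * Real.tanh x))

/-- The numerator `2 h h'' − (h')²` for `h(ξ) = ξ tanh ξ`. -/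
noncomputable def NN (x : ℝ) : ℝ :=
  2 * (x * Real.tanh x) * (2*(1 - Real.tanh x^2) - 2*x*Real.tanh x*(1 - Real.tanh x^2))
    - (Real.tanh x + x*(1 - Real.tanh x^2))^2

/-- Second derivative of `gWW` on `(0,∞)`. -/
noncomputable def FF (x : ℝ) : ℝ :=
  NN x / (4 * (x * Real.tanh x) * Real.sqrt (x * Real.tanh x))

lemma xt_pos {x : ℝ} (hx : 0 < x) : 0 < x * Real.tanh x := mul_pos hx (myTanh_pos hx)

lemma gWW_hasDeriv {x : ℝ} (hx : 0 < x) : HasDerivAt gWW (G1 x) x := by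
  unfold gWW G1
  exact (h_prod x).sqrt (xt_pos hx).ne'

lemma G1_hasDeriv {x : ℝ} (hx : 0 < x) : HasDerivAt G1 (FF x) x := by
  have hxt := xt_pos hx
  have hr : 0 < Real.sqrt (x * Real.tanh x) := Real.sqrt_pos.2 hxt
  have hr2 : Real.sqrt (x * Real.tanh x) ^ 2 = x * Real.tanh x := Real.sq_sqrt hxt.le
  have ht := myTanh_hasDerivAt x
  have hs : HasDerivAt (fun y => 1 - Real.tanh y ^ 2)
      (-(2 * Real.tanh x ^ 1 * (1 - Real.tanh x ^ 2))) x := (ht.pow 2).const_sub 1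
  have hnum : HasDerivAt (fun y => Real.tanh y + y * (1 - Real.tanh y ^ 2))
      ((1 - Real.tanh x ^ 2) + (1 * (1 - Real.tanh x ^ 2) +
        x * -(2 * Real.tanh x ^ 1 * (1 - Real.tanh x ^ 2)))) x :=
    ht.add ((hasDerivAt_id x).mul hs)
  have hden : HasDerivAt (fun y => 2 * Real.sqrt (y * Real.tanh y))
      (2 * ((Real.tanh x + x * (1 - Real.tanh x ^ 2)) / (2 * Real.sqrt (x * Real.tanh x)))) x :=
    ((h_prod x).sqrt hxt.ne').const_mul 2
  have hdne : 2 * Real.sqrt (x * Real.tanh x) ≠ 0 := by positivity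
  have hdiv := hnum.div hden hdne
  have heq : G1 = fun y =>
      (Real.tanh y + y * (1 - Real.tanh y ^ 2)) / (2 * Real.sqrt (y * Real.tanh y)) := rfl
  rw [heq]
  refine hdiv.congr_deriv ?_
  unfold FF NN
  set r := Real.sqrt (x * Real.tanh x) with hrdef
  set u := x * Real.tanh x with hudef
  rw [← hr2]
  field_simp
  ring

/-- The algebraic identity connecting `NN` and `M0`. -/
lemma NN_eq (x : ℝ) : NN x * Real.cosh x ^ 4 = M0 x := by
  unfold NN M0
  have e2 : Real.exp (2*x) = Real.exp x ^ 2 := by rw [two_mul, Real.exp_add]; ring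
  have em2 : Real.exp ((-2)*x) = (Real.exp x ^ 2)⁻¹ := by
    rw [neg_mul, Real.exp_neg, e2]
  have e4 : Real.exp (4*x) = Real.exp x ^ 4 := by
    rw [show (4:ℝ)*x = x+x+x+x by ring, Real.exp_add, Real.exp_add, Real.exp_add]; ring
  have em4 : Real.exp ((-4)*x) = (Real.exp x ^ 4)⁻¹ := by
    rw [neg_mul, Real.exp_neg, e4]
  rw [Real.tanh_eq_sinh_div_cosh, Real.sinh_eq, Real.cosh_eq, Real.exp_neg, e2, em2, e4, em4]
  have ha : Real.exp x ≠ 0 := Real.exp_ne_zero x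
  have hc : Real.exp x + (Real.exp x)⁻¹ ≠ 0 := by positivity
  field_simp
  ring

/-- Asymptotics of `g''` at the origin: `g` is twice differentiable on `(0,∞)` and
`g''(ξ)/ξ → −1` as `ξ → 0⁺`; in particular `|g''(ξ)| ~ |ξ|` as `ξ → 0⁺`. -/
theorem g_second_deriv_asymptotics_at_zero :
    (∀ ξ : ℝ, 0 < ξ → DifferentiableAt ℝ gWW ξ) ∧
    (∀ ξ : ℝ, 0 < ξ → DifferentiableAt ℝ (deriv gWW) ξ) ∧
    Filter.Tendsto (fun ξ : ℝ => iteratedDeriv 2 gWW ξ / ξ)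
      (nhdsWithin 0 (Set.Ioi 0)) (nhds (-1)) := by
  have hev : ∀ x : ℝ, 0 < x → deriv gWW =ᶠ[nhds x] G1 := by
    intro x hx
    filter_upwards [isOpen_Ioi.mem_nhds hx] with y hy
    exact (gWW_hasDeriv hy).deriv
  have hiter : ∀ x : ℝ, 0 < x → iteratedDeriv 2 gWW x = FF x := by
    intro x hx
    rw [show (2:ℕ) = 1 + 1 from rfl, iteratedDeriv_succ, iteratedDeriv_one]
    rw [(hev x hx).deriv_eq, (G1_hasDeriv hx).deriv]
  refine ⟨fun ξ hξ => (gWW_hasDeriv hξ).differentiableAt,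
    fun ξ hξ => (G1_hasDeriv hξ).differentiableAt.congr_of_eventuallyEq (hev ξ hξ),
    ?_⟩
  -- limits of the individual factors
  have ht1 : Tendsto (fun x => x / Real.tanh x) (nhdsWithin 0 (Set.Ioi 0)) (nhds 1) := by
    have hd := myTanh_hasDerivAt 0
    rw [hasDerivAt_iff_tendsto_slope] at hd
    have hd1 : Tendsto (slope Real.tanh 0) (nhdsWithin 0 {(0:ℝ)}ᶜ) (nhds 1) := by
      simpa using hd
    have hm : nhdsWithin (0:ℝ) (Set.Ioi 0) ≤ nhdsWithin 0 {(0:ℝ)}ᶜ :=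
      nhdsWithin_mono 0 (fun y hy => ne_of_gt hy)
    have hsl : Tendsto (fun x => Real.tanh x / x) (nhdsWithin 0 (Set.Ioi 0)) (nhds 1) := by
      refine (hd1.mono_left hm).congr fun x => ?_
      simp [slope_def_field]
    have := hsl.inv₀ one_ne_zero
    simp only [inv_one] at this
    refine this.congr fun x => ?_
    rw [inv_div]
  have hsq : Tendsto (fun x => Real.sqrt (x / Real.tanh x) / 4)
      (nhdsWithin 0 (Set.Ioi 0)) (nhds (1/4)) := by
    have hc : Tendsto (fun x => Real.sqrt (x / Real.tanh x))
        (nhdsWithin 0 (Set.Ioi 0)) (nhds 1) := by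
      have := (Real.continuous_sqrt.continuousAt (x := (1:ℝ))).tendsto.comp ht1
      simpa [Function.comp_def] using this
    exact hc.div_const 4
  have hcosh : Tendsto (fun x => (Real.cosh x ^ 4)⁻¹) (nhdsWithin 0 (Set.Ioi 0)) (nhds 1) := by
    have hca : Tendsto (fun x : ℝ => (Real.cosh x ^ 4)⁻¹) (nhds 0)
        (nhds ((Real.cosh 0 ^ 4)⁻¹)) :=
      ((Real.continuous_cosh.pow 4).continuousAt).inv₀ (by norm_num [Real.cosh_zero])
    rw [show ((Real.cosh 0 ^ 4)⁻¹ : ℝ) = 1 by norm_num [Real.cosh_zero]] at hca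
    exact hca.mono_left nhdsWithin_le_nhds
  have hprod : Tendsto (fun x => ((M0 x / x^4) * (Real.cosh x ^ 4)⁻¹)
      * ((x / Real.tanh x) * (Real.sqrt (x / Real.tanh x) / 4)))
      (nhdsWithin 0 (Set.Ioi 0)) (nhds (-1)) := by
    have := (tendsto_M0_div.mul hcosh).mul (ht1.mul hsq)
    convert this using 2
    norm_num
  refine hprod.congr' ?_
  filter_upwards [eventually_mem_nhdsWithin] with x hx
  have hx' : (0:ℝ) < x := hx
  have ht := myTanh_pos hx'
  have hxt := xt_pos hx'
  have hr : 0 < Real.sqrt (x * Real.tanh x) := Real.sqrt_pos.2 hxt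
  have hcoshp := Real.cosh_pos x
  have hN : NN x = M0 x / Real.cosh x ^ 4 := by
    rw [← NN_eq x]; field_simp
  have hsx : Real.sqrt (x / Real.tanh x) = x / Real.sqrt (x * Real.tanh x) := by
    have h1 : x / Real.tanh x = x^2 / (x * Real.tanh x) := by
      rw [pow_two]
      exact (mul_div_mul_left x (Real.tanh x) hx'.ne').symm
    rw [h1, Real.sqrt_div (sq_nonneg x), Real.sqrt_sq hx'.le]
  rw [hsx, hiter x hx']
  unfold FF
  rw [hN]
  field_simp
end
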